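/- Let F = (N_1^2 + N_2^2 − 2 N_{-1}^2)/√12 where N_{-1}, N_1, N_2 are i.i.d. standard Gaussians. Then E[F] = 0, E[F^2] = 1, E[P_4(F)] = 0 and E[P_8(F)] = 0, yet F is not distributed as the product of two independent standard Gaussians (e.g., its sixth moment differs from 225). -/

import Mathlib

open MeasureTheory ProbabilityTheory

/-- The joint law of two independent standard Gaussians. -/
noncomputable def gauss2 : Measure (ℝ × ℝ) :=
  (gaussianReal 0 1).prod (gaussianReal 0 1)

/-- The joint law of three i.i.d. standard Gaussians (N₋₁, N₁, N₂). -/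
noncomputable def gauss3 : Measure (ℝ × ℝ × ℝ) :=
  (gaussianReal 0 1).prod ((gaussianReal 0 1).prod (gaussianReal 0 1))

/-- F = (N₁² + N₂² - 2N₋₁²)/√12, with q.1 = N₋₁, q.2.1 = N₁, q.2.2 = N₂. -/
noncomputable def chiComb (q : ℝ × ℝ × ℝ) : ℝ :=
  (q.2.1 ^ 2 + q.2.2 ^ 2 - 2 * q.1 ^ 2) / Real.sqrt 12

section Aux
open scoped ENNReal NNReal
open Real Filter

lemma intPowExp (n : ℕ) :
    Integrable (fun x : ℝ => x ^ n * Real.exp (-(1/2) * x ^ 2)) := by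
  simpa [Real.rpow_natCast] using
    integrable_rpow_mul_exp_neg_mul_sq (b := 1/2) (by norm_num) (s := n)
      (lt_of_lt_of_le (by norm_num) (Nat.cast_nonneg n))

lemma tendPowExpTop (n : ℕ) :
    Tendsto (fun x : ℝ => x ^ n * Real.exp (-(1/2) * x ^ 2)) atTop (nhds 0) := by
  have h := rpow_mul_exp_neg_mul_sq_isLittleO_exp_neg (b := 1/2) (by norm_num) (n : ℝ)
  have h2 : Tendsto (fun x : ℝ => Real.exp (-(1/2) * x)) atTop (nhds 0) := by
    have h3 : Tendsto (fun x : ℝ => -(1/2) * x) atTop atBot :=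
      tendsto_id.const_mul_atTop_of_neg (by norm_num)
    exact Real.tendsto_exp_atBot.comp h3
  have := h.isBigO.trans_tendsto h2
  simpa [Real.rpow_natCast] using this

lemma tendPowExpBot (n : ℕ) :
    Tendsto (fun x : ℝ => x ^ n * Real.exp (-(1/2) * x ^ 2)) atBot (nhds 0) := by
  have h := (tendPowExpTop n).comp tendsto_neg_atBot_atTop
  have h2 := h.const_mul ((-1:ℝ)^n)
  rw [mul_zero] at h2
  refine h2.congr (fun x => ?_)
  show (-1:ℝ)^n * ((-x) ^ n * Real.exp (-(1/2) * (-x) ^ 2)) = _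
  rw [neg_sq, ← mul_assoc, ← mul_pow]
  norm_num

lemma Mm_rec (n : ℕ) : (∫ x : ℝ, x ^ (n+2) * Real.exp (-(1/2) * x ^ 2)) =
    (n+1) * ∫ x : ℝ, x ^ n * Real.exp (-(1/2) * x ^ 2) := by
  set f : ℝ → ℝ := fun x => -(x ^ (n+1) * Real.exp (-(1/2) * x^2)) with hfdef
  set g : ℝ → ℝ := fun x =>
    x^(n+2) * Real.exp (-(1/2)*x^2) - ((n:ℝ)+1) * (x^n * Real.exp (-(1/2)*x^2)) with hgdef
  have hderiv : ∀ x : ℝ, HasDerivAt f (g x) x := by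
    intro x
    have h1 : HasDerivAt (fun y : ℝ => y ^ (n+1)) (((n:ℝ)+1) * x^n) x := by
      simpa using hasDerivAt_pow (n+1) x
    have h2 : HasDerivAt (fun y : ℝ => Real.exp (-(1/2) * y^2))
        (Real.exp (-(1/2)*x^2) * (-(1/2) * (2*x^1))) x :=
      (((hasDerivAt_pow 2 x).const_mul (-(1/2:ℝ)))).exp
    have h3 := (h1.mul h2).neg
    convert (show HasDerivAt f _ x from h3) using 1
    simp only [g]
    ring
  have hint : Integrable g := (intPowExp (n+2)).sub ((intPowExp n).const_mul _)
  have h0 : f 0 = 0 := by simp [f]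
  have hIoi : ∫ x in Set.Ioi (0:ℝ), g x = 0 - f 0 :=
    integral_Ioi_of_hasDerivAt_of_tendsto (hderiv 0).continuousAt.continuousWithinAt
      (fun x _ => hderiv x) hint.integrableOn (by simpa [f] using (tendPowExpTop (n+1)).neg)
  have hIic : ∫ x in Set.Iic (0:ℝ), g x = f 0 - 0 :=
    integral_Iic_of_hasDerivAt_of_tendsto (hderiv 0).continuousAt.continuousWithinAt
      (fun x _ => hderiv x) hint.integrableOn (by simpa [f] using (tendPowExpBot (n+1)).neg)
  have htot : ∫ x : ℝ, g x = 0 := by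
    rw [← intervalIntegral.integral_Iic_add_Ioi hint.integrableOn hint.integrableOn, hIoi, hIic]
    simp
  rw [hgdef] at htot
  rw [integral_sub (intPowExp (n+2)) ((intPowExp n).const_mul _), integral_const_mul] at htot
  push_cast
  linarith

lemma gaussianReal_eq' : gaussianReal 0 1 =
    MeasureTheory.volume.withDensity (fun x => ((gaussianPDFReal 0 1 x).toNNReal : ℝ≥0∞)) := by
  rw [gaussianReal_of_var_ne_zero 0 one_ne_zero]
  rfl

lemma integral_gauss_eq (f : ℝ → ℝ) :
    ∫ x, f x ∂(gaussianReal 0 1) = ∫ x : ℝ, gaussianPDFReal 0 1 x • f x := by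
  rw [gaussianReal_eq', integral_withDensity_eq_integral_smul
    (measurable_gaussianPDFReal 0 1).real_toNNReal]
  congr 1
  funext x
  rw [NNReal.smul_def, Real.coe_toNNReal _ (gaussianPDFReal_nonneg 0 1 x)]

lemma integrable_gauss_iff (f : ℝ → ℝ) :
    Integrable f (gaussianReal 0 1) ↔
      Integrable (fun x : ℝ => gaussianPDFReal 0 1 x • f x) MeasureTheory.volume := by
  rw [gaussianReal_eq', integrable_withDensity_iff_integrable_smul
    (measurable_gaussianPDFReal 0 1).real_toNNReal]
  constructor <;> intro h <;> refine h.congr (Filter.Eventually.of_forall fun x => ?_) <;>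
    simp only [NNReal.smul_def, Real.coe_toNNReal _ (gaussianPDFReal_nonneg 0 1 x)]

lemma pdf_eq (x : ℝ) : gaussianPDFReal 0 1 x = (√(2 * π))⁻¹ * Real.exp (-(1/2) * x ^ 2) := by
  rw [gaussianPDFReal]
  norm_num
  left
  ring_nf

noncomputable def mm (n : ℕ) : ℝ := ∫ x, x ^ n ∂(gaussianReal 0 1)

lemma ipow (n : ℕ) : Integrable (fun x : ℝ => x ^ n) (gaussianReal 0 1) := by
  rw [integrable_gauss_iff]
  refine ((intPowExp n).const_mul ((√(2 * π))⁻¹)).congr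
    (Filter.Eventually.of_forall fun x => ?_)
  simp only [pdf_eq, smul_eq_mul]
  ring

lemma mm_eq (n : ℕ) : mm n = (√(2 * π))⁻¹ * ∫ x : ℝ, x ^ n * Real.exp (-(1/2) * x ^ 2) := by
  rw [mm, integral_gauss_eq, ← integral_const_mul]
  congr 1
  funext x
  rw [pdf_eq, smul_eq_mul]
  ring

lemma mm_rec (n : ℕ) : mm (n + 2) = (n + 1) * mm n := by
  rw [mm_eq, mm_eq, Mm_rec]
  ring

lemma mm0 : mm 0 = 1 := by
  have : IsProbabilityMeasure (gaussianReal (0:ℝ) 1) := inferInstance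
  simp [mm]

lemma mm2 : mm 2 = 1 := by have := mm_rec 0; rw [mm0] at this; norm_num at this; simpa using this
lemma mm4 : mm 4 = 3 := by have := mm_rec 2; rw [mm2] at this; norm_num at this; simpa using this
lemma mm6 : mm 6 = 15 := by have := mm_rec 4; rw [mm4] at this; norm_num at this; simpa using this
lemma mm8 : mm 8 = 105 := by have := mm_rec 6; rw [mm6] at this; norm_num at this; simpa using this
lemma mm10 : mm 10 = 945 := by have := mm_rec 8; rw [mm8] at this; norm_num at this; simpa using this
lemma mm12 : mm 12 = 10395 := by have := mm_rec 10; rw [mm10] at this; norm_num at this; simpa using this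
lemma mm14 : mm 14 = 135135 := by have := mm_rec 12; rw [mm12] at this; norm_num at this; simpa using this
lemma mm16 : mm 16 = 2027025 := by have := mm_rec 14; rw [mm14] at this; norm_num at this; simpa using this

noncomputable def term (q : ℝ × ℝ × ℝ) (t : ℝ × ℕ × ℕ × ℕ) : ℝ :=
  t.1 * (q.1 ^ t.2.1 * (q.2.1 ^ t.2.2.1 * q.2.2 ^ t.2.2.2))

lemma mono_intg (i j k : ℕ) :
    Integrable (fun q : ℝ × ℝ × ℝ => q.1 ^ i * (q.2.1 ^ j * q.2.2 ^ k)) gauss3 := by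
  show Integrable _ ((gaussianReal 0 1).prod ((gaussianReal 0 1).prod (gaussianReal 0 1)))
  exact (ipow i).mul_prod ((ipow j).mul_prod (ipow k))

lemma mono_int (i j k : ℕ) :
    ∫ q : ℝ × ℝ × ℝ, q.1 ^ i * (q.2.1 ^ j * q.2.2 ^ k) ∂gauss3 = mm i * (mm j * mm k) := by
  rw [show gauss3 = (gaussianReal 0 1).prod ((gaussianReal 0 1).prod (gaussianReal 0 1)) from rfl]
  rw [show (fun q : ℝ × ℝ × ℝ => q.1 ^ i * (q.2.1 ^ j * q.2.2 ^ k)) =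
    (fun q : ℝ × ℝ × ℝ => (fun a : ℝ => a ^ i) q.1 * ((fun p : ℝ × ℝ => p.1 ^ j * p.2 ^ k) q.2)) from rfl]
  rw [integral_prod_mul (μ := gaussianReal 0 1) (fun a : ℝ => a ^ i)
    (fun p : ℝ × ℝ => p.1 ^ j * p.2 ^ k)]
  rw [integral_prod_mul (fun a : ℝ => a ^ j) (fun a : ℝ => a ^ k)]
  rfl

lemma key : ∀ L : List (ℝ × ℕ × ℕ × ℕ),
    Integrable (fun q : ℝ × ℝ × ℝ => (L.map (term q)).sum) gauss3 ∧
    ∫ q, (L.map (term q)).sum ∂gauss3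
      = (L.map (fun t => t.1 * (mm t.2.1 * (mm t.2.2.1 * mm t.2.2.2)))).sum := by
  intro L
  induction L with
  | nil => simpa using (integrable_zero _ _ (gauss3))
  | cons t L ih =>
    have h1 : Integrable (fun q => term q t) gauss3 := (mono_intg t.2.1 t.2.2.1 t.2.2.2).const_mul t.1
    refine ⟨by simpa [Pi.add_def] using h1.add ih.1, ?_⟩
    have e : (fun q : ℝ × ℝ × ℝ => ((t :: L).map (term q)).sum)
        = fun q => term q t + (L.map (term q)).sum := by funext q; simp
    rw [e, integral_add h1 ih.1, ih.2]
    simp only [term, integral_const_mul, mono_int, List.map_cons, List.sum_cons]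

lemma S1 : Integrable (fun q : ℝ × ℝ × ℝ => (q.2.1 ^ 2 + q.2.2 ^ 2 - 2 * q.1 ^ 2) ^ 1) gauss3 ∧
    ∫ q, (q.2.1 ^ 2 + q.2.2 ^ 2 - 2 * q.1 ^ 2) ^ 1 ∂gauss3 = 0 := by
  have h := key [((-2:ℝ), 2, 0, 0), ((1:ℝ), 0, 0, 2), ((1:ℝ), 0, 2, 0)]
  have e : (fun q : ℝ × ℝ × ℝ => (q.2.1 ^ 2 + q.2.2 ^ 2 - 2 * q.1 ^ 2) ^ 1) =
      fun q => (([((-2:ℝ), 2, 0, 0), ((1:ℝ), 0, 0, 2), ((1:ℝ), 0, 2, 0)]).map (term q)).sum := by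
    funext q
    simp only [List.map_cons, List.map_nil, List.sum_cons, List.sum_nil, term]
    ring
  rw [e]
  refine ⟨h.1, ?_⟩
  rw [h.2]
  simp only [List.map_cons, List.map_nil, List.sum_cons, List.sum_nil,
    mm0, mm2, mm4, mm6, mm8, mm10, mm12, mm14, mm16]
  norm_num

lemma S2 : Integrable (fun q : ℝ × ℝ × ℝ => (q.2.1 ^ 2 + q.2.2 ^ 2 - 2 * q.1 ^ 2) ^ 2) gauss3 ∧
    ∫ q, (q.2.1 ^ 2 + q.2.2 ^ 2 - 2 * q.1 ^ 2) ^ 2 ∂gauss3 = 12 := by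
  have h := key [((4:ℝ), 4, 0, 0), ((-4:ℝ), 2, 0, 2), ((1:ℝ), 0, 0, 4), ((-4:ℝ), 2, 2, 0), ((2:ℝ), 0, 2, 2), ((1:ℝ), 0, 4, 0)]
  have e : (fun q : ℝ × ℝ × ℝ => (q.2.1 ^ 2 + q.2.2 ^ 2 - 2 * q.1 ^ 2) ^ 2) =
      fun q => (([((4:ℝ), 4, 0, 0), ((-4:ℝ), 2, 0, 2), ((1:ℝ), 0, 0, 4), ((-4:ℝ), 2, 2, 0), ((2:ℝ), 0, 2, 2), ((1:ℝ), 0, 4, 0)]).map (term q)).sum := by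
    funext q
    simp only [List.map_cons, List.map_nil, List.sum_cons, List.sum_nil, term]
    ring
  rw [e]
  refine ⟨h.1, ?_⟩
  rw [h.2]
  simp only [List.map_cons, List.map_nil, List.sum_cons, List.sum_nil,
    mm0, mm2, mm4, mm6, mm8, mm10, mm12, mm14, mm16]
  norm_num

lemma S4 : Integrable (fun q : ℝ × ℝ × ℝ => (q.2.1 ^ 2 + q.2.2 ^ 2 - 2 * q.1 ^ 2) ^ 4) gauss3 ∧
    ∫ q, (q.2.1 ^ 2 + q.2.2 ^ 2 - 2 * q.1 ^ 2) ^ 4 ∂gauss3 = 1296 := by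
  have h := key [((16:ℝ), 8, 0, 0), ((-32:ℝ), 6, 0, 2), ((24:ℝ), 4, 0, 4), ((-8:ℝ), 2, 0, 6), ((1:ℝ), 0, 0, 8), ((-32:ℝ), 6, 2, 0), ((48:ℝ), 4, 2, 2), ((-24:ℝ), 2, 2, 4), ((4:ℝ), 0, 2, 6), ((24:ℝ), 4, 4, 0), ((-24:ℝ), 2, 4, 2), ((6:ℝ), 0, 4, 4), ((-8:ℝ), 2, 6, 0), ((4:ℝ), 0, 6, 2), ((1:ℝ), 0, 8, 0)]
  have e : (fun q : ℝ × ℝ × ℝ => (q.2.1 ^ 2 + q.2.2 ^ 2 - 2 * q.1 ^ 2) ^ 4) =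
      fun q => (([((16:ℝ), 8, 0, 0), ((-32:ℝ), 6, 0, 2), ((24:ℝ), 4, 0, 4), ((-8:ℝ), 2, 0, 6), ((1:ℝ), 0, 0, 8), ((-32:ℝ), 6, 2, 0), ((48:ℝ), 4, 2, 2), ((-24:ℝ), 2, 2, 4), ((4:ℝ), 0, 2, 6), ((24:ℝ), 4, 4, 0), ((-24:ℝ), 2, 4, 2), ((6:ℝ), 0, 4, 4), ((-8:ℝ), 2, 6, 0), ((4:ℝ), 0, 6, 2), ((1:ℝ), 0, 8, 0)]).map (term q)).sum := by
    funext q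
    simp only [List.map_cons, List.map_nil, List.sum_cons, List.sum_nil, term]
    ring
  rw [e]
  refine ⟨h.1, ?_⟩
  rw [h.2]
  simp only [List.map_cons, List.map_nil, List.sum_cons, List.sum_nil,
    mm0, mm2, mm4, mm6, mm8, mm10, mm12, mm14, mm16]
  norm_num

lemma S6 : Integrable (fun q : ℝ × ℝ × ℝ => (q.2.1 ^ 2 + q.2.2 ^ 2 - 2 * q.1 ^ 2) ^ 6) gauss3 ∧
    ∫ q, (q.2.1 ^ 2 + q.2.2 ^ 2 - 2 * q.1 ^ 2) ^ 6 ∂gauss3 = 457920 := by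
  have h := key [((64:ℝ), 12, 0, 0), ((-192:ℝ), 10, 0, 2), ((240:ℝ), 8, 0, 4), ((-160:ℝ), 6, 0, 6), ((60:ℝ), 4, 0, 8), ((-12:ℝ), 2, 0, 10), ((1:ℝ), 0, 0, 12), ((-192:ℝ), 10, 2, 0), ((480:ℝ), 8, 2, 2), ((-480:ℝ), 6, 2, 4), ((240:ℝ), 4, 2, 6), ((-60:ℝ), 2, 2, 8), ((6:ℝ), 0, 2, 10), ((240:ℝ), 8, 4, 0), ((-480:ℝ), 6, 4, 2), ((360:ℝ), 4, 4, 4), ((-120:ℝ), 2, 4, 6), ((15:ℝ), 0, 4, 8), ((-160:ℝ), 6, 6, 0), ((240:ℝ), 4, 6, 2), ((-120:ℝ), 2, 6, 4), ((20:ℝ), 0, 6, 6), ((60:ℝ), 4, 8, 0), ((-60:ℝ), 2, 8, 2), ((15:ℝ), 0, 8, 4), ((-12:ℝ), 2, 10, 0), ((6:ℝ), 0, 10, 2), ((1:ℝ), 0, 12, 0)]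
  have e : (fun q : ℝ × ℝ × ℝ => (q.2.1 ^ 2 + q.2.2 ^ 2 - 2 * q.1 ^ 2) ^ 6) =
      fun q => (([((64:ℝ), 12, 0, 0), ((-192:ℝ), 10, 0, 2), ((240:ℝ), 8, 0, 4), ((-160:ℝ), 6, 0, 6), ((60:ℝ), 4, 0, 8), ((-12:ℝ), 2, 0, 10), ((1:ℝ), 0, 0, 12), ((-192:ℝ), 10, 2, 0), ((480:ℝ), 8, 2, 2), ((-480:ℝ), 6, 2, 4), ((240:ℝ), 4, 2, 6), ((-60:ℝ), 2, 2, 8), ((6:ℝ), 0, 2, 10), ((240:ℝ), 8, 4, 0), ((-480:ℝ), 6, 4, 2), ((360:ℝ), 4, 4, 4), ((-120:ℝ), 2, 4, 6), ((15:ℝ), 0, 4, 8), ((-160:ℝ), 6, 6, 0), ((240:ℝ), 4, 6, 2), ((-120:ℝ), 2, 6, 4), ((20:ℝ), 0, 6, 6), ((60:ℝ), 4, 8, 0), ((-60:ℝ), 2, 8, 2), ((15:ℝ), 0, 8, 4), ((-12:ℝ), 2, 10, 0), ((6:ℝ), 0, 10, 2), ((1:ℝ), 0, 12, 0)]).map (term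 q)).sum := by
    funext q
    simp only [List.map_cons, List.map_nil, List.sum_cons, List.sum_nil, term]
    ring
  rw [e]
  refine ⟨h.1, ?_⟩
  rw [h.2]
  simp only [List.map_cons, List.map_nil, List.sum_cons, List.sum_nil,
    mm0, mm2, mm4, mm6, mm8, mm10, mm12, mm14, mm16]
  norm_num

lemma S8 : Integrable (fun q : ℝ × ℝ × ℝ => (q.2.1 ^ 2 + q.2.2 ^ 2 - 2 * q.1 ^ 2) ^ 8) gauss3 ∧
    ∫ q, (q.2.1 ^ 2 + q.2.2 ^ 2 - 2 * q.1 ^ 2) ^ 8 ∂gauss3 = 344736000 := by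
  have h := key [((256:ℝ), 16, 0, 0), ((-1024:ℝ), 14, 0, 2), ((1792:ℝ), 12, 0, 4), ((-1792:ℝ), 10, 0, 6), ((1120:ℝ), 8, 0, 8), ((-448:ℝ), 6, 0, 10), ((112:ℝ), 4, 0, 12), ((-16:ℝ), 2, 0, 14), ((1:ℝ), 0, 0, 16), ((-1024:ℝ), 14, 2, 0), ((3584:ℝ), 12, 2, 2), ((-5376:ℝ), 10, 2, 4), ((4480:ℝ), 8, 2, 6), ((-2240:ℝ), 6, 2, 8), ((672:ℝ), 4, 2, 10), ((-112:ℝ), 2, 2, 12), ((8:ℝ), 0, 2, 14), ((1792:ℝ), 12, 4, 0), ((-5376:ℝ), 10, 4, 2), ((6720:ℝ), 8, 4, 4), ((-4480:ℝ), 6, 4, 6), ((1680:ℝ), 4, 4, 8), ((-336:ℝ), 2, 4, 10), ((28:ℝ), 0, 4, 12), ((-1792:ℝ), 10, 6, 0), ((4480:ℝ), 8, 6, 2), ((-4480:ℝ), 6, 6, 4), ((2240:ℝ), 4, 6, 6), ((-560:ℝ), 2, 6, 8), ((56:ℝ), 0, 6, 10), ((1120:ℝ), 8, 8, 0), ((-2240:ℝ),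 6, 8, 2), ((1680:ℝ), 4, 8, 4), ((-560:ℝ), 2, 8, 6), ((70:ℝ), 0, 8, 8), ((-448:ℝ), 6, 10, 0), ((672:ℝ), 4, 10, 2), ((-336:ℝ), 2, 10, 4), ((56:ℝ), 0, 10, 6), ((112:ℝ), 4, 12, 0), ((-112:ℝ), 2, 12, 2), ((28:ℝ), 0, 12, 4), ((-16:ℝ), 2, 14, 0), ((8:ℝ), 0, 14, 2), ((1:ℝ), 0, 16, 0)]
  have e : (fun q : ℝ × ℝ × ℝ => (q.2.1 ^ 2 + q.2.2 ^ 2 - 2 * q.1 ^ 2) ^ 8) =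
      fun q => (([((256:ℝ), 16, 0, 0), ((-1024:ℝ), 14, 0, 2), ((1792:ℝ), 12, 0, 4), ((-1792:ℝ), 10, 0, 6), ((1120:ℝ), 8, 0, 8), ((-448:ℝ), 6, 0, 10), ((112:ℝ), 4, 0, 12), ((-16:ℝ), 2, 0, 14), ((1:ℝ), 0, 0, 16), ((-1024:ℝ), 14, 2, 0), ((3584:ℝ), 12, 2, 2), ((-5376:ℝ), 10, 2, 4), ((4480:ℝ), 8, 2, 6), ((-2240:ℝ), 6, 2, 8), ((672:ℝ), 4, 2, 10), ((-112:ℝ), 2, 2, 12), ((8:ℝ), 0, 2, 14), ((1792:ℝ), 12, 4, 0), ((-5376:ℝ), 10, 4, 2), ((6720:ℝ), 8, 4, 4), ((-4480:ℝ), 6, 4, 6), ((1680:ℝ), 4, 4, 8), ((-336:ℝ), 2, 4, 10), ((28:ℝ), 0, 4, 12), ((-1792:ℝ), 10, 6, 0), ((4480:ℝ), 8, 6, 2), ((-4480:ℝ), 6, 6, 4), ((2240:ℝ), 4, 6, 6), ((-560:ℝ), 2, 6, 8), ((56:ℝ), 0, 6, 10), ((1120:ℝ), 8, 8, 0), ((-2240:ℝ),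 6, 8, 2), ((1680:ℝ), 4, 8, 4), ((-560:ℝ), 2, 8, 6), ((70:ℝ), 0, 8, 8), ((-448:ℝ), 6, 10, 0), ((672:ℝ), 4, 10, 2), ((-336:ℝ), 2, 10, 4), ((56:ℝ), 0, 10, 6), ((112:ℝ), 4, 12, 0), ((-112:ℝ), 2, 12, 2), ((28:ℝ), 0, 12, 4), ((-16:ℝ), 2, 14, 0), ((8:ℝ), 0, 14, 2), ((1:ℝ), 0, 16, 0)]).map (term q)).sum := by
    funext q
    simp only [List.map_cons, List.map_nil, List.sum_cons, List.sum_nil, term]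
    ring
  rw [e]
  refine ⟨h.1, ?_⟩
  rw [h.2]
  simp only [List.map_cons, List.map_nil, List.sum_cons, List.sum_nil,
    mm0, mm2, mm4, mm6, mm8, mm10, mm12, mm14, mm16]
  norm_num

instance : IsProbabilityMeasure gauss3 := by
  rw [show gauss3 = (gaussianReal 0 1).prod ((gaussianReal 0 1).prod (gaussianReal 0 1)) from rfl]
  infer_instance

lemma sqrt12_pow : ∀ k : ℕ, (Real.sqrt 12) ^ (2 * k) = 12 ^ k := by
  intro k
  rw [pow_mul, Real.sq_sqrt (by norm_num : (12:ℝ) ≥ 0)]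

lemma chi_pow_eq (k : ℕ) : (fun q : ℝ × ℝ × ℝ => chiComb q ^ (2 * k)) =
    fun q => (q.2.1 ^ 2 + q.2.2 ^ 2 - 2 * q.1 ^ 2) ^ (2 * k) / 12 ^ k := by
  funext q
  rw [chiComb, div_pow, sqrt12_pow]

end Aux

/-- F = (N₁² + N₂² - 2N₋₁²)/√12 satisfies E[F] = 0, E[F²] = 1, E[P₄(F)] = 0 and
E[P₈(F)] = 0 (with P₄(x) = x⁴ - 14x² + 5, P₈(x) = x⁸ - 140x⁶ + 3486x⁴ - 12284x² + 1385),
yet F is not distributed as the product of two independent standard Gaussians: its sixth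
moment differs from 225. -/
theorem chiComb_matches_P4_P8_but_not_normal_product :
    (∫ q, chiComb q ∂gauss3 = 0) ∧
    (∫ q, chiComb q ^ 2 ∂gauss3 = 1) ∧
    (∫ q, (chiComb q ^ 4 - 14 * chiComb q ^ 2 + 5) ∂gauss3 = 0) ∧
    (∫ q, (chiComb q ^ 8 - 140 * chiComb q ^ 6 + 3486 * chiComb q ^ 4
        - 12284 * chiComb q ^ 2 + 1385) ∂gauss3 = 0) ∧
    (Measure.map chiComb gauss3 ≠ Measure.map (fun p : ℝ × ℝ => p.1 * p.2) gauss2) ∧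
    (∫ q, chiComb q ^ 6 ∂gauss3 ≠ 225) := by
  have e2 := chi_pow_eq 1
  have e4 := chi_pow_eq 2
  have e6 := chi_pow_eq 3
  have e8 := chi_pow_eq 4
  norm_num at e2 e4 e6 e8
  have i2 : Integrable (fun q => chiComb q ^ 2) gauss3 := by rw [e2]; exact S2.1.div_const _
  have i4 : Integrable (fun q => chiComb q ^ 4) gauss3 := by rw [e4]; exact S4.1.div_const _
  have i6 : Integrable (fun q => chiComb q ^ 6) gauss3 := by rw [e6]; exact S6.1.div_const _
  have i8 : Integrable (fun q => chiComb q ^ 8) gauss3 := by rw [e8]; exact S8.1.div_const _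
  have v2 : ∫ q, chiComb q ^ 2 ∂gauss3 = 1 := by rw [e2, integral_div, S2.2]; norm_num
  have v4 : ∫ q, chiComb q ^ 4 ∂gauss3 = 9 := by rw [e4, integral_div, S4.2]; norm_num
  have v6 : ∫ q, chiComb q ^ 6 ∂gauss3 = 265 := by rw [e6, integral_div, S6.2]; norm_num
  have v8 : ∫ q, chiComb q ^ 8 ∂gauss3 = 16625 := by rw [e8, integral_div, S8.2]; norm_num
  refine ⟨?_, v2, ?_, ?_, ?_, by rw [v6]; norm_num⟩
  · have : (fun q : ℝ × ℝ × ℝ => chiComb q) =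
        fun q => (q.2.1 ^ 2 + q.2.2 ^ 2 - 2 * q.1 ^ 2) ^ 1 / Real.sqrt 12 := by
      funext q; rw [chiComb, pow_one]
    rw [this, integral_div, S1.2, zero_div]
  · have ia : Integrable (fun q => chiComb q ^ 4 - 14 * chiComb q ^ 2) gauss3 :=
      i4.sub (i2.const_mul 14)
    rw [integral_add ia (integrable_const 5),
      integral_sub i4 (i2.const_mul 14), integral_const_mul, v4, v2]
    norm_num
  · have ia1 : Integrable (fun q => chiComb q ^ 8 - 140 * chiComb q ^ 6) gauss3 :=
      i8.sub (i6.const_mul 140)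
    have ia2 : Integrable (fun q => chiComb q ^ 8 - 140 * chiComb q ^ 6
        + 3486 * chiComb q ^ 4) gauss3 := ia1.add (i4.const_mul 3486)
    have ia3 : Integrable (fun q => chiComb q ^ 8 - 140 * chiComb q ^ 6
        + 3486 * chiComb q ^ 4 - 12284 * chiComb q ^ 2) gauss3 := ia2.sub (i2.const_mul 12284)
    rw [integral_add ia3 (integrable_const 1385),
      integral_sub ia2 (i2.const_mul 12284),
      integral_add ia1 (i4.const_mul 3486),
      integral_sub i8 (i6.const_mul 140), integral_const_mul, integral_const_mul,
      integral_const_mul, v2, v4, v6, v8]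
    norm_num
  · intro h
    have hmeas : Measurable chiComb := by unfold chiComb; fun_prop
    have h1 : ∫ x : ℝ, x ^ 6 ∂(Measure.map chiComb gauss3) = 265 := by
      rw [integral_map hmeas.aemeasurable
        (by fun_prop : AEStronglyMeasurable (fun x : ℝ => x ^ 6) _)]
      exact v6
    have h2 : ∫ x : ℝ, x ^ 6 ∂(Measure.map (fun p : ℝ × ℝ => p.1 * p.2) gauss2) = 225 := by
      rw [integral_map (by fun_prop) (by fun_prop : AEStronglyMeasurable (fun x : ℝ => x ^ 6) _)]
      have e : (fun p : ℝ × ℝ => (p.1 * p.2) ^ 6) =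
          fun p : ℝ × ℝ => (fun a : ℝ => a ^ 6) p.1 * (fun a : ℝ => a ^ 6) p.2 := by
        funext p; exact mul_pow _ _ _
      show ∫ p : ℝ × ℝ, (p.1 * p.2) ^ 6 ∂((gaussianReal 0 1).prod (gaussianReal 0 1)) = 225
      rw [e, integral_prod_mul (f := fun a : ℝ => a ^ 6) (g := fun a : ℝ => a ^ 6)]
      show mm 6 * mm 6 = 225
      rw [mm6]; norm_num
    rw [h, h2] at h1
    norm_num at h1
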